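/- For t > 0, (e^{-t}/√(4πt)) ∫_0^∞ exp(-x²/(4t)) (sinh x / (cosh x - 1 + a)) dx → 0 as t → 0⁺, for any constant a > 0. -/

import Mathlib

open Real Filter MeasureTheory

private lemma sinh_le_mul_cosh {x : ℝ} (hx : 0 ≤ x) : Real.sinh x ≤ x * Real.cosh x := by
  have hd : ∀ y : ℝ, HasDerivAt (fun z => z * Real.cosh z - Real.sinh z) (y * Real.sinh y) y := by
    intro y
    have h := ((hasDerivAt_id y).mul (Real.hasDerivAt_cosh y)).sub (Real.hasDerivAt_sinh y)
    simp only [id_eq] at h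
    refine h.congr_deriv ?_; ring
  have hmono : MonotoneOn (fun z => z * Real.cosh z - Real.sinh z) (Set.Ici (0 : ℝ)) := by
    apply monotoneOn_of_deriv_nonneg (convex_Ici 0)
      (Continuous.continuousOn (by continuity))
    · intro y _
      exact (hd y).differentiableAt.differentiableWithinAt
    · intro y hy
      rw [interior_Ici] at hy
      rw [(hd y).deriv]
      exact le_of_lt (mul_pos hy (Real.sinh_pos_iff.2 hy))
  have h0 := hmono (Set.self_mem_Ici) hx hx
  simpa using h0

private lemma integral_x_gauss {b : ℝ} (hb : 0 < b) :
    ∫ x in Set.Ioi (0 : ℝ), x * Real.exp (-b * x ^ 2) = (2 * b)⁻¹ := by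
  have hb' : (2 * b) ≠ 0 := by positivity
  have hderiv : ∀ x ∈ Set.Ici (0 : ℝ),
      HasDerivAt (fun y => -(2 * b)⁻¹ * Real.exp (-b * y ^ 2)) (x * Real.exp (-b * x ^ 2)) x := by
    intro x _
    have h := (((hasDerivAt_pow 2 x).const_mul (-b)).exp).const_mul (-(2 * b)⁻¹)
    refine h.congr_deriv ?_
    field_simp
    ring
  have hint : IntegrableOn (fun x : ℝ => x * Real.exp (-b * x ^ 2)) (Set.Ioi 0) :=
    (integrable_mul_exp_neg_mul_sq hb).integrableOn
  have htend : Tendsto (fun y : ℝ => -(2 * b)⁻¹ * Real.exp (-b * y ^ 2)) atTop (nhds 0) := by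
    have h1 : Tendsto (fun y : ℝ => -b * y ^ 2) atTop atBot := by
      apply Tendsto.const_mul_atTop_of_neg (neg_neg_iff_pos.2 hb)
      exact tendsto_pow_atTop (by norm_num)
    have := (Real.tendsto_exp_atBot.comp h1).const_mul (-(2 * b)⁻¹)
    simpa using this
  have := integral_Ioi_of_hasDerivAt_of_tendsto' hderiv hint htend
  rw [this]
  simp

theorem cuspidal_elliptic_small_time (a : ℝ) (ha : 0 < a) :
    Tendsto
      (fun t : ℝ =>
        Real.exp (-t) / Real.sqrt (4 * π * t) *
          ∫ x in Set.Ioi (0 : ℝ),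
            Real.exp (-x ^ 2 / (4 * t)) * (Real.sinh x / (Real.cosh x - 1 + a)))
      (nhdsWithin 0 (Set.Ioi 0)) (nhds 0) := by
  set M : ℝ := 1 + 1 / a with hM
  have hMpos : 0 < M := by positivity
  have hden : ∀ x : ℝ, 0 < Real.cosh x - 1 + a := fun x => by
    nlinarith [Real.one_le_cosh x]
  -- pointwise bound: sinh x / (cosh x - 1 + a) ≤ M * x for x ≥ 0
  have hbound : ∀ x : ℝ, 0 ≤ x → Real.sinh x / (Real.cosh x - 1 + a) ≤ M * x := by
    intro x hx
    rw [div_le_iff₀ (hden x)]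
    have h1 : Real.sinh x ≤ x * Real.cosh x := sinh_le_mul_cosh hx
    have h2 : Real.cosh x ≤ M * (Real.cosh x - 1 + a) := by
      have haM : a * M = a + 1 := by rw [hM]; field_simp
      have hc := Real.one_le_cosh x
      have h3 : a * Real.cosh x ≤ a * (M * (Real.cosh x - 1 + a)) := by
        have : a * (M * (Real.cosh x - 1 + a)) = (a * M) * (Real.cosh x - 1 + a) := by ring
        rw [this, haM]; nlinarith
      exact le_of_mul_le_mul_left h3 ha
    calc Real.sinh x ≤ x * Real.cosh x := h1
      _ ≤ x * (M * (Real.cosh x - 1 + a)) := by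
          exact mul_le_mul_of_nonneg_left h2 hx
      _ = M * x * (Real.cosh x - 1 + a) := by ring
  have hnonneg : ∀ x : ℝ, 0 ≤ x → 0 ≤ Real.sinh x / (Real.cosh x - 1 + a) := by
    intro x hx
    exact div_nonneg (Real.sinh_nonneg_iff.2 hx) (le_of_lt (hden x))
  -- bound the integral for t > 0
  have key : ∀ t : ℝ, 0 < t →
      (∫ x in Set.Ioi (0 : ℝ),
        Real.exp (-x ^ 2 / (4 * t)) * (Real.sinh x / (Real.cosh x - 1 + a))) ∈
        Set.Icc (0 : ℝ) (M * (2 * t)) := by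
    intro t ht
    set b : ℝ := 1 / (4 * t) with hb
    have hbpos : 0 < b := by positivity
    have hrw : ∀ x : ℝ, Real.exp (-x ^ 2 / (4 * t)) = Real.exp (-b * x ^ 2) := by
      intro x; congr 1; rw [hb]; ring
    have hgint : IntegrableOn (fun x : ℝ => Real.exp (-b * x ^ 2) * (M * x)) (Set.Ioi 0) := by
      have h2 := ((integrable_mul_exp_neg_mul_sq hbpos).const_mul M).integrableOn
        (s := Set.Ioi (0:ℝ))
      apply h2.congr (Filter.Eventually.of_forall ?_)
      intro x; ring
    have hcont : Continuous (fun x : ℝ =>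
        Real.exp (-x ^ 2 / (4 * t)) * (Real.sinh x / (Real.cosh x - 1 + a))) := by
      apply Continuous.mul
      · exact Real.continuous_exp.comp (by continuity)
      · exact Real.continuous_sinh.div (by continuity) (fun x => ne_of_gt (hden x))
    have hfint : IntegrableOn (fun x : ℝ =>
        Real.exp (-x ^ 2 / (4 * t)) * (Real.sinh x / (Real.cosh x - 1 + a))) (Set.Ioi 0) := by
      apply Integrable.mono hgint hcont.aestronglyMeasurable
      filter_upwards [ae_restrict_mem measurableSet_Ioi] with x hx
      have hx0 : (0:ℝ) ≤ x := le_of_lt hx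
      rw [Real.norm_eq_abs, Real.norm_eq_abs, abs_of_nonneg
        (mul_nonneg (Real.exp_pos _).le (hnonneg x hx0)),
        abs_of_nonneg (mul_nonneg (Real.exp_pos _).le (by positivity))]
      rw [hrw x]
      exact mul_le_mul_of_nonneg_left (hbound x hx0) (Real.exp_pos _).le
    constructor
    · apply setIntegral_nonneg measurableSet_Ioi
      intro x hx
      exact mul_nonneg (Real.exp_pos _).le (hnonneg x (le_of_lt hx))
    · have hle : (∫ x in Set.Ioi (0 : ℝ),
          Real.exp (-x ^ 2 / (4 * t)) * (Real.sinh x / (Real.cosh x - 1 + a))) ≤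
          ∫ x in Set.Ioi (0 : ℝ), Real.exp (-b * x ^ 2) * (M * x) := by
        apply setIntegral_mono_on hfint hgint measurableSet_Ioi
        intro x hx
        rw [hrw x]
        exact mul_le_mul_of_nonneg_left (hbound x (le_of_lt hx)) (Real.exp_pos _).le
      have hval : (∫ x in Set.Ioi (0 : ℝ), Real.exp (-b * x ^ 2) * (M * x)) = M * (2 * t) := by
        have h1 : (∫ x in Set.Ioi (0 : ℝ), Real.exp (-b * x ^ 2) * (M * x)) =
            M * ∫ x in Set.Ioi (0 : ℝ), x * Real.exp (-b * x ^ 2) := by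
          rw [← integral_const_mul]
          congr 1; ext x; ring
        rw [h1, integral_x_gauss hbpos]
        rw [hb]
        field_simp
        ring
      exact hle.trans (le_of_eq hval)
  -- squeeze
  have hG : Tendsto (fun t : ℝ =>
      Real.exp (-t) / Real.sqrt (4 * π * t) * (M * (2 * t)))
      (nhdsWithin 0 (Set.Ioi 0)) (nhds 0) := by
    have heq : ∀ t ∈ Set.Ioi (0:ℝ),
        Real.exp (-t) / Real.sqrt (4 * π * t) * (M * (2 * t)) =
        (2 * M / Real.sqrt (4 * π)) * (Real.exp (-t) * Real.sqrt t) := by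
      intro t ht
      have ht' : (0:ℝ) < t := ht
      have h4π : (0:ℝ) < 4 * π := by positivity
      have hsq : Real.sqrt (4 * π * t) = Real.sqrt (4 * π) * Real.sqrt t :=
        Real.sqrt_mul (le_of_lt h4π) t
      have hst : Real.sqrt t * Real.sqrt t = t := Real.mul_self_sqrt ht'.le
      have hstpos : 0 < Real.sqrt t := Real.sqrt_pos.2 ht'
      have hsπpos : 0 < Real.sqrt (4 * π) := Real.sqrt_pos.2 h4π
      rw [hsq]
      rw [show Real.exp (-t) / (Real.sqrt (4 * π) * Real.sqrt t) * (M * (2 * t)) =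
          Real.exp (-t) / (Real.sqrt (4 * π) * Real.sqrt t) * (M * (2 * (Real.sqrt t * Real.sqrt t)))
          from by rw [hst]]
      field_simp
    have hlim : Tendsto (fun t : ℝ =>
        (2 * M / Real.sqrt (4 * π)) * (Real.exp (-t) * Real.sqrt t))
        (nhdsWithin 0 (Set.Ioi 0)) (nhds 0) := by
      have h1 : Tendsto (fun t : ℝ => Real.exp (-t) * Real.sqrt t)
          (nhdsWithin 0 (Set.Ioi 0)) (nhds 0) := by
        have he : Tendsto (fun t : ℝ => Real.exp (-t)) (nhds (0:ℝ)) (nhds 1) := by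
          have := (Real.continuous_exp.comp continuous_neg).tendsto (0:ℝ)
          simpa [Function.comp_def] using this
        have hs : Tendsto Real.sqrt (nhds (0:ℝ)) (nhds 0) := by
          have := Real.continuous_sqrt.tendsto (0:ℝ)
          simpa using this
        have := (he.mul hs).mono_left
          (nhdsWithin_le_nhds (s := Set.Ioi (0:ℝ)) (a := (0:ℝ)))
        simpa using this
      have := h1.const_mul (2 * M / Real.sqrt (4 * π))
      simpa using this
    apply hlim.congr'
    filter_upwards [self_mem_nhdsWithin] with t ht
    exact (heq t ht).symm
  apply squeeze_zero' (g := fun t : ℝ =>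
      Real.exp (-t) / Real.sqrt (4 * π * t) * (M * (2 * t))) _ _ hG
  · filter_upwards [self_mem_nhdsWithin] with t ht
    have h1 := (key t ht).1
    exact mul_nonneg (by positivity) h1
  · filter_upwards [self_mem_nhdsWithin] with t ht
    have h2 := (key t ht).2
    apply mul_le_mul_of_nonneg_left h2
    positivity
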